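/- For every a ∈ (0,1), the limit of f(n) as n tends to 2 from above exists and equals f₂ = 2(a − √a)/(a · ln a). -/

import Mathlib

/-- The reduced identifiability function of the pairwise SIR model:
`f a n = ((a^(1/n) − a^(2/n))/(a^(2/n) − a))·(n−2)`. -/
noncomputable def pwF (a n : ℝ) : ℝ :=
  ((a ^ ((1 : ℝ)/n) - a ^ ((2 : ℝ)/n)) / (a ^ ((2 : ℝ)/n) - a)) * (n - 2)

/-- `f₂ = 2(a − √a)/(a·ln a)`. -/
noncomputable def pwFTwo (a : ℝ) : ℝ := 2 * (a - Real.sqrt a) / (a * Real.log a)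

open Filter Real Set

/-- For every `a ∈ (0,1)`, `f(n) → f₂ = 2(a − √a)/(a·ln a)` as `n → 2⁺`. -/
theorem pairwise_f_tendsto_two (a : ℝ) (ha0 : 0 < a) (ha1 : a < 1) :
    Filter.Tendsto (pwF a) (nhdsWithin 2 (Set.Ioi (2 : ℝ))) (nhds (pwFTwo a)) := by
  have hane : a ≠ 0 := ne_of_gt ha0
  have hla : Real.log a ≠ 0 := ne_of_lt (Real.log_neg ha0 ha1)
  set d : ℝ := a * Real.log a * (-(1/2)) with hd
  have hdne : d ≠ 0 := by
    rw [hd]; exact mul_ne_zero (mul_ne_zero hane hla) (by norm_num)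
  -- derivative of n ↦ a^(2/n) - a at 2
  have h1 : HasDerivAt (fun n : ℝ => (2:ℝ)/n) (-(1/2)) 2 := by
    have := (hasDerivAt_inv (two_ne_zero)).const_mul (2:ℝ)
    simpa [div_eq_mul_inv] using this.congr_deriv (by norm_num)
  have h2 : HasDerivAt (fun n : ℝ => a ^ ((2:ℝ)/n) - a) d 2 := by
    have hc : HasDerivAt (fun x : ℝ => a ^ x) (a ^ ((2:ℝ)/2) * Real.log a) ((2:ℝ)/2) :=
      (Real.hasStrictDerivAt_const_rpow ha0 _).hasDerivAt
    have := (hc.comp 2 h1).sub_const a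
    have h22 : (2:ℝ)/2 = 1 := by norm_num
    rw [h22, Real.rpow_one] at this
    exact this.congr_deriv hd.symm
  have hf2 : (fun n : ℝ => a ^ ((2:ℝ)/n) - a) 2 = 0 := by
    norm_num
  have hslope : Tendsto (fun n : ℝ => (a ^ ((2:ℝ)/n) - a) / (n - 2)) (nhdsWithin 2 {(2:ℝ)}ᶜ)
      (nhds d) := by
    have := hasDerivAt_iff_tendsto_slope.mp h2
    refine this.congr (fun n => ?_)
    simp [slope, hf2, div_eq_inv_mul]
  have hinv : Tendsto (fun n : ℝ => (n - 2) / (a ^ ((2:ℝ)/n) - a)) (nhdsWithin 2 {(2:ℝ)}ᶜ)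
      (nhds d⁻¹) := by
    have := hslope.inv₀ hdne
    refine this.congr (fun n => ?_)
    rw [inv_div]
  have hinv' : Tendsto (fun n : ℝ => (n - 2) / (a ^ ((2:ℝ)/n) - a))
      (nhdsWithin 2 (Set.Ioi (2:ℝ))) (nhds d⁻¹) :=
    hinv.mono_left (nhdsWithin_mono _ (fun x hx => ne_of_gt hx))
  -- numerator tends to √a - a
  have hnum : Tendsto (fun n : ℝ => a ^ ((1:ℝ)/n) - a ^ ((2:ℝ)/n))
      (nhdsWithin 2 (Set.Ioi (2:ℝ))) (nhds (Real.sqrt a - a)) := by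
    have c1 : ContinuousAt (fun n : ℝ => a ^ ((1:ℝ)/n)) 2 :=
      (Real.continuousAt_const_rpow hane).comp
        ((continuousAt_const.div continuousAt_id (by norm_num)))
    have c2 : ContinuousAt (fun n : ℝ => a ^ ((2:ℝ)/n)) 2 :=
      (Real.continuousAt_const_rpow hane).comp
        ((continuousAt_const.div continuousAt_id (by norm_num)))
    have := ((c1.sub c2).continuousWithinAt (s := Set.Ioi (2:ℝ))).tendsto
    have hval : a ^ ((1:ℝ)/2) - a ^ ((2:ℝ)/2) = Real.sqrt a - a := by
      rw [Real.sqrt_eq_rpow]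
      norm_num
    rw [← hval]; exact this
  have hmul := hnum.mul hinv'
  have heq : ∀ n : ℝ, pwF a n =
      (a ^ ((1:ℝ)/n) - a ^ ((2:ℝ)/n)) * ((n - 2) / (a ^ ((2:ℝ)/n) - a)) := by
    intro n; unfold pwF; ring
  have hval2 : (Real.sqrt a - a) * d⁻¹ = pwFTwo a := by
    rw [hd]
    unfold pwFTwo
    field_simp
    ring
  rw [show nhds (pwFTwo a) = nhds ((Real.sqrt a - a) * d⁻¹) by rw [hval2]]
  exact hmul.congr (fun n => (heq n).symm)
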